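/- Let K = ℚ(√m) (m > 0 squarefree) be a real quadratic field of class number one, and let ε be a unit of O_K. Assume the abc conjecture for K. For each n ∈ ℕ write ε^n − 1 = u_n·v_n with u_n the squarefree part and v_n the squarefull part of ε^n − 1. Then for every δ > 0 there is a constant C(K,δ) such that for all n ≥ 1 (with ε^n ≠ 1), |ε^n| ≤ C(K,δ)·(N(u_n)²·√(N(v_n)))^(1+δ), where |·| is the absolute value under a fixed real embedding of K. -/

import Mathlib

open NumberField IsDedekindDomain Filter
open scoped Classical

variable (K : Type*) [Field K] [NumberField K]

/-- The absolute value of the norm `N_{K/ℚ}` of an algebraic integer, as a natural number. -/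
noncomputable def absNormElem (x : 𝓞 K) : ℕ := (Algebra.norm ℤ x).natAbs

/-- `v_𝔭(p)`: the ramification index of the prime ideal `𝔭 = v.asIdeal` over the rational
prime `p` lying below it (`pℤ = 𝔭 ∩ ℤ`). -/
noncomputable def ramIdxOverQ (v : HeightOneSpectrum (𝓞 K)) : ℕ :=
  Ideal.ramificationIdx'
    (Ideal.comap (algebraMap ℤ (𝓞 K)) v.asIdeal) v.asIdeal

/-- `‖x‖_v = N(𝔭)^(−v_𝔭(x))` for a finite place `v`, with `‖0‖_v = 0`. -/
noncomputable def normAtFin (v : HeightOneSpectrum (𝓞 K)) (x : K) : ℝ :=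
  if h : v.valuation K x = 0 then 0
  else (Ideal.absNorm v.asIdeal : ℝ) ^ (Multiplicative.toAdd (WithZero.unzero h))

/-- `‖x‖_w = |g(x)|^e` for an archimedean place `w`, where `e = 1` if `w` is real and
`e = 2` if `w` is complex. -/
noncomputable def normAtInf (w : InfinitePlace K) (x : K) : ℝ := (w x) ^ w.mult

/-- The height `H_K(a,b,c) = ∏_v max(‖a‖_v, ‖b‖_v, ‖c‖_v)`, the product running over all
(finite and infinite) places of `K`. -/
noncomputable def heightK (a b c : K) : ℝ :=
  (∏ᶠ v : HeightOneSpectrum (𝓞 K),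
      max (max (normAtFin K v a) (normAtFin K v b)) (normAtFin K v c)) *
  ∏ w : InfinitePlace K,
      max (max (normAtInf K w a) (normAtInf K w b)) (normAtInf K w c)

/-- The radical `rad_K(a,b,c) = ∏_{𝔭 ∈ I_K(a,b,c)} N(𝔭)^(v_𝔭(p))`, where `I_K(a,b,c)` is the
set of prime ideals of `𝓞 K` at which `‖a‖_v, ‖b‖_v, ‖c‖_v` are not all equal. -/
noncomputable def radK (a b c : K) : ℝ :=
  ∏ᶠ v : HeightOneSpectrum (𝓞 K),
    if normAtFin K v a = normAtFin K v b ∧ normAtFin K v b = normAtFin K v c then 1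
    else (Ideal.absNorm v.asIdeal : ℝ) ^ (ramIdxOverQ K v)

/-- The abc conjecture for the number field `K`: for every `δ > 0` there is a constant
`C(K,δ)` such that `H_K(a,b,c) ≤ C(K,δ) · rad_K(a,b,c)^(1+δ)` for all nonzero
`a, b, c ∈ K` with `a + b + c = 0`. -/
noncomputable def AbcConjecture : Prop :=
  ∀ δ : ℝ, 0 < δ → ∃ C : ℝ, 0 < C ∧ ∀ a b c : K, a ≠ 0 → b ≠ 0 → c ≠ 0 →
    a + b + c = 0 → heightK K a b c ≤ C * (radK K a b c) ^ (1 + δ)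


section Aux

variable {K : Type*} [Field K] [NumberField K]

open IsDedekindDomain.HeightOneSpectrum in
lemma Aux.absNorm_one_lt (v : HeightOneSpectrum (𝓞 K)) :
    1 < (Ideal.absNorm v.asIdeal : ℝ) := by
  have h0 : Ideal.absNorm v.asIdeal ≠ 0 :=
    fun h => v.ne_bot (Ideal.absNorm_eq_zero_iff.mp h)
  have h1 : Ideal.absNorm v.asIdeal ≠ 1 :=
    fun h => v.isPrime.ne_top (Ideal.absNorm_eq_one_iff.mp h)
  exact_mod_cast by omega

lemma Aux.absNorm_one_lt_nat (v : HeightOneSpectrum (𝓞 K)) :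
    1 < Ideal.absNorm v.asIdeal := by
  have := Aux.absNorm_one_lt v; exact_mod_cast this

variable {v : HeightOneSpectrum (𝓞 K)} {x : K}

lemma Aux.val_ne_zero (hx : x ≠ 0) : v.valuation K x ≠ 0 := (Valuation.ne_zero_iff _).mpr hx

lemma Aux.normAtFin_pos (hx : x ≠ 0) : 0 < normAtFin K v x := by
  rw [normAtFin, dif_neg (Aux.val_ne_zero hx)]
  exact zpow_pos (lt_trans one_pos (Aux.absNorm_one_lt v)) _

lemma Aux.normAtFin_eq_one (h : v.valuation K x = 1) : normAtFin K v x = 1 := by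
  have hx : v.valuation K x ≠ 0 := by simp [h]
  rw [normAtFin, dif_neg hx]
  have : WithZero.unzero hx = 1 := by
    have h2 := (WithZero.coe_unzero hx).trans h
    exact_mod_cast h2
  simp [this]

lemma Aux.normAtFin_lt_one (h : v.valuation K x < 1) (hx : x ≠ 0) : normAtFin K v x < 1 := by
  have hx' := Aux.val_ne_zero (v := v) hx
  rw [normAtFin, dif_neg hx']
  have h2 : Multiplicative.toAdd (WithZero.unzero hx') < 0 := by
    have h1 : WithZero.unzero hx' < Multiplicative.ofAdd (0 : ℤ) := by
      rw [← WithZero.coe_lt_coe, WithZero.coe_unzero]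
      simpa using h
    exact h1
  exact zpow_lt_one_of_neg₀ (Aux.absNorm_one_lt v) h2

lemma Aux.val_unit_eq_one (v : HeightOneSpectrum (𝓞 K)) (ε : (𝓞 K)ˣ) :
    v.valuation K (algebraMap (𝓞 K) K (ε : 𝓞 K)) = 1 := by
  have h1 := v.valuation_le_one (K := K) (ε : 𝓞 K)
  have h2 := v.valuation_le_one (K := K) ((ε⁻¹ : (𝓞 K)ˣ) : 𝓞 K)
  have h3 : v.valuation K (algebraMap (𝓞 K) K (ε : 𝓞 K)) *
      v.valuation K (algebraMap (𝓞 K) K ((ε⁻¹ : (𝓞 K)ˣ) : 𝓞 K)) = 1 := by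
    rw [← Valuation.map_mul, ← map_mul]
    norm_num
  refine le_antisymm h1 ?_
  calc (1 : WithZero (Multiplicative ℤ)) = _ * _ := h3.symm
    _ ≤ v.valuation K (algebraMap (𝓞 K) K (ε : 𝓞 K)) * 1 := mul_le_mul_right h2 _
    _ = v.valuation K (algebraMap (𝓞 K) K (ε : 𝓞 K)) := mul_one _

lemma Aux.normAtFin_unit (v : HeightOneSpectrum (𝓞 K)) (ε : (𝓞 K)ˣ) :
    normAtFin K v (algebraMap (𝓞 K) K (ε : 𝓞 K)) = 1 :=
  Aux.normAtFin_eq_one (Aux.val_unit_eq_one v ε)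

lemma Aux.normAtFin_neg_one (v : HeightOneSpectrum (𝓞 K)) :
    normAtFin K v (-1 : K) = 1 := by
  refine Aux.normAtFin_eq_one ?_
  rw [Valuation.map_neg, Valuation.map_one]

lemma Aux.am_ne_zero {y : 𝓞 K} (hy : y ≠ 0) : algebraMap (𝓞 K) K y ≠ 0 := by
  simpa using (map_ne_zero_iff _ (IsFractionRing.injective (𝓞 K) K)).mpr hy

lemma Aux.normAtFin_am_eq_one (v : HeightOneSpectrum (𝓞 K)) {y : 𝓞 K}
    (hy : y ≠ 0) (hmem : y ∉ v.asIdeal) :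
    normAtFin K v (algebraMap (𝓞 K) K y) = 1 := by
  refine Aux.normAtFin_eq_one ?_
  rcases lt_or_eq_of_le (v.valuation_le_one (K := K) y) with h | h
  · exfalso
    exact hmem (Ideal.dvd_span_singleton.mp ((v.valuation_lt_one_iff_dvd y).mp h))
  · exact h

lemma Aux.normAtFin_am_lt_one (v : HeightOneSpectrum (𝓞 K)) {y : 𝓞 K}
    (hy : y ≠ 0) (hmem : y ∈ v.asIdeal) :
    normAtFin K v (algebraMap (𝓞 K) K y) < 1 := by
  refine Aux.normAtFin_lt_one ?_ (Aux.am_ne_zero hy)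
  exact (v.valuation_lt_one_iff_dvd y).mpr (Ideal.dvd_span_singleton.mpr hmem)

lemma Aux.comap_ne_bot (v : HeightOneSpectrum (𝓞 K)) :
    Ideal.comap (algebraMap ℤ (𝓞 K)) v.asIdeal ≠ ⊥ := by
  intro h
  have hmem : ((Ideal.absNorm v.asIdeal : ℤ)) ∈ Ideal.comap (algebraMap ℤ (𝓞 K)) v.asIdeal := by
    rw [Ideal.mem_comap]
    have : ((Ideal.absNorm v.asIdeal : ℕ) : 𝓞 K) ∈ v.asIdeal := Ideal.absNorm_mem v.asIdeal
    convert this using 1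
    push_cast
    rfl
  rw [h, Ideal.mem_bot] at hmem
  have : Ideal.absNorm v.asIdeal ≠ 0 := fun h0 => v.ne_bot (Ideal.absNorm_eq_zero_iff.mp h0)
  exact this (by exact_mod_cast hmem)

lemma Aux.norm_pow_ramIdx_le (hdeg : Module.finrank ℚ K = 2) (v : HeightOneSpectrum (𝓞 K)) :
    Ideal.absNorm v.asIdeal ^ ramIdxOverQ K v ≤ Ideal.absNorm v.asIdeal ^ 2 := by
  set e := ramIdxOverQ K v with he
  rcases Nat.eq_zero_or_pos e with he0 | he1
  · rw [he0, pow_zero]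
    exact Nat.one_le_pow 2 _ (by have := Aux.absNorm_one_lt_nat v; omega)
  set q := Ideal.comap (algebraMap ℤ (𝓞 K)) v.asIdeal with hq
  have hqb : q ≠ ⊥ := Aux.comap_ne_bot v
  haveI : q.IsPrime := Ideal.IsPrime.comap _
  have hg : Prime (Submodule.IsPrincipal.generator q) :=
    Submodule.IsPrincipal.prime_generator_of_isPrime q hqb
  set g := Submodule.IsPrincipal.generator q with hgdef
  have hspan : Ideal.span {g} = q := Ideal.span_singleton_generator q
  set p := g.natAbs with hp
  have hpprime : Nat.Prime p := Int.prime_iff_natAbs_prime.mp hg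
  have hrank : Module.finrank ℤ (𝓞 K) = 2 := (NumberField.RingOfIntegers.rank K).trans hdeg
  have hmapnorm : Ideal.absNorm (Ideal.map (algebraMap ℤ (𝓞 K)) q) = p ^ 2 := by
    rw [← hspan, Ideal.map_span, Set.image_singleton, Ideal.absNorm_span_singleton]
    have b := Module.Free.chooseBasis ℤ (𝓞 K)
    rw [Algebra.norm_algebraMap_of_basis b]
    rw [← Module.finrank_eq_card_chooseBasisIndex, hrank]
    rw [Int.natAbs_pow]
  have hdvd : v.asIdeal ^ e ∣ Ideal.map (algebraMap ℤ (𝓞 K)) q :=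
    Ideal.dvd_iff_le.mpr Ideal.le_pow_ramificationIdx
  have hNdvd : Ideal.absNorm v.asIdeal ^ e ∣ p ^ 2 := by
    rw [← hmapnorm, ← map_pow]
    exact map_dvd Ideal.absNorm hdvd
  have hN1 : 1 < Ideal.absNorm v.asIdeal := Aux.absNorm_one_lt_nat v
  have hNp : Ideal.absNorm v.asIdeal ∣ p ^ 2 := (dvd_pow_self _ he1.ne').trans hNdvd
  obtain ⟨k, hk2, hkeq⟩ := (Nat.dvd_prime_pow hpprime).mp hNp
  have hk1 : 1 ≤ k := by
    rcases Nat.eq_zero_or_pos k with h | h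
    · rw [h, pow_zero] at hkeq; omega
    · exact h
  have hpke : p ^ (k * e) ∣ p ^ 2 := by
    rw [pow_mul, ← hkeq]; exact hNdvd
  have hke : k * e ≤ 2 := (Nat.pow_dvd_pow_iff_le_right hpprime.one_lt).mp hpke
  calc Ideal.absNorm v.asIdeal ^ e = p ^ (k * e) := by rw [pow_mul, ← hkeq]
    _ ≤ p ^ (k * 2) := Nat.pow_le_pow_right hpprime.one_lt.le (by omega)
    _ = Ideal.absNorm v.asIdeal ^ 2 := by rw [pow_mul, ← hkeq]

lemma Aux.differentIdeal_ne_bot : differentIdeal ℤ (𝓞 K) ≠ ⊥ := by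
  intro h
  have hcoe := coeIdeal_differentIdeal ℤ ℚ K (𝓞 K)
  rw [h] at hcoe
  have h0 : ((⊥ : Ideal (𝓞 K)) : FractionalIdeal (nonZeroDivisors (𝓞 K)) K) = 0 := by simp
  rw [h0] at hcoe
  exact inv_ne_zero
    (FractionalIdeal.dual_ne_zero ℤ ℚ (one_ne_zero (α := FractionalIdeal (nonZeroDivisors (𝓞 K)) K))) hcoe.symm

lemma Aux.dvd_different_of_two_le (v : HeightOneSpectrum (𝓞 K))
    (h2 : 2 ≤ ramIdxOverQ K v) : v.asIdeal ∣ differentIdeal ℤ (𝓞 K) := by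
  set q := Ideal.comap (algebraMap ℤ (𝓞 K)) v.asIdeal with hq
  have hqb : q ≠ ⊥ := Aux.comap_ne_bot v
  haveI : q.IsPrime := Ideal.IsPrime.comap _
  haveI : q.IsMaximal := Ideal.IsPrime.isMaximal inferInstance hqb
  have hdvd : v.asIdeal ^ (ramIdxOverQ K v) ∣ Ideal.map (algebraMap ℤ (𝓞 K)) q :=
    Ideal.dvd_iff_le.mpr Ideal.le_pow_ramificationIdx
  have h := pow_sub_one_dvd_differentIdeal (A := ℤ) (B := 𝓞 K) v.asIdeal (ramIdxOverQ K v) hqb hdvd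
  exact (dvd_pow_self v.asIdeal (by omega : ramIdxOverQ K v - 1 ≠ 0)).trans h

end Aux

set_option maxHeartbeats 2000000 in
/-- Let `K = ℚ(√m)` (`m > 0` squarefree) be a real quadratic field of class number one and
`ε` a unit of `𝓞 K`. Assume the abc conjecture for `K` and write `ε^n − 1 = u_n * v_n`
with `u_n` squarefree, `v_n` squarefull and coprime to `u_n`. Then for every `δ > 0`
there is a constant `C(K,δ) > 0` such that for all `n ≥ 1` with `ε^n ≠ 1`,
`|ε^n| ≤ C(K,δ) · (N(u_n)² · √(N(v_n)))^(1+δ)`, where `|·|` is taken under a fixed real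
embedding `φ` of `K`. -/
theorem abc_bound_real_quadratic
    (m : ℕ) (hm : 0 < m) (hmsf : Squarefree m)
    (θ : K) (hθ : θ ^ 2 = (m : K))
    (hgen : IntermediateField.adjoin ℚ {θ} = ⊤)
    (hdeg : Module.finrank ℚ K = 2)
    (hclass : NumberField.classNumber K = 1)
    (φ : K →+* ℝ)
    (ε : (𝓞 K)ˣ)
    (habc : AbcConjecture K)
    (u v : ℕ → 𝓞 K)
    (huv : ∀ n : ℕ, (ε : 𝓞 K) ^ n - 1 = u n * v n)
    (hu : ∀ n : ℕ, Squarefree (u n))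
    (hv : ∀ n : ℕ, ∀ π : 𝓞 K, Prime π → π ∣ v n → π ^ 2 ∣ v n)
    (hcop : ∀ n : ℕ, IsCoprime (u n) (v n)) :
    ∀ δ : ℝ, 0 < δ → ∃ C : ℝ, 0 < C ∧ ∀ n : ℕ, 1 ≤ n → (ε : 𝓞 K) ^ n ≠ 1 →
      |φ (algebraMap (𝓞 K) K (ε : 𝓞 K))| ^ n ≤
        C * ((absNormElem K (u n) : ℝ) ^ 2 *
          Real.sqrt (absNormElem K (v n))) ^ (1 + δ) := by
  intro δ hδ
  obtain ⟨C, hC, hABC⟩ := habc δ hδ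
  have hT : {w : HeightOneSpectrum (𝓞 K) | w.asIdeal ∣ differentIdeal ℤ (𝓞 K)}.Finite :=
    Ideal.finite_factors (Aux.differentIdeal_ne_bot (K := K))
  set T : Finset (HeightOneSpectrum (𝓞 K)) := hT.toFinset with hTdef
  set DN : ℕ := ∏ w ∈ T, Ideal.absNorm w.asIdeal with hDNdef
  have hDN1 : 1 ≤ DN := Finset.one_le_prod' fun w _ => (Aux.absNorm_one_lt_nat w).le
  have hDNR : (1 : ℝ) ≤ (DN : ℝ) := by exact_mod_cast hDN1
  refine ⟨C * (DN : ℝ) ^ (1 + δ), by positivity, ?_⟩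
  intro n hn hne
  -- basic setup
  have hw0 : (ε : 𝓞 K) ^ n - 1 ≠ 0 := sub_ne_zero.mpr hne
  have huv0 : u n * v n ≠ 0 := (huv n) ▸ hw0
  have hu0 : u n ≠ 0 := left_ne_zero_of_mul huv0
  have hv0 : v n ≠ 0 := right_ne_zero_of_mul huv0
  set a : K := algebraMap (𝓞 K) K ((ε : 𝓞 K) ^ n) with hadef
  set b : K := (-1 : K) with hbdef
  set c : K := algebraMap (𝓞 K) K (-(u n * v n)) with hcdef
  have ha0 : a ≠ 0 := Aux.am_ne_zero (pow_ne_zero n ε.ne_zero)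
  have hb0 : b ≠ 0 := by norm_num [hbdef]
  have hc0 : c ≠ 0 := Aux.am_ne_zero (neg_ne_zero.mpr huv0)
  have hsum : a + b + c = 0 := by
    rw [hadef, hbdef, hcdef, map_neg]
    have h1 : ((ε : 𝓞 K) ^ n : 𝓞 K) - 1 = u n * v n := huv n
    have h2 := congrArg (algebraMap (𝓞 K) K) h1
    rw [map_sub, map_one] at h2
    linear_combination h2
  have key := hABC a b c ha0 hb0 hc0 hsum
  -- the height lower bound
  have hheight : |φ (algebraMap (𝓞 K) K (ε : 𝓞 K))| ^ n ≤ heightK K a b c := by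
    have hfin : ∀ w : HeightOneSpectrum (𝓞 K),
        max (max (normAtFin K w a) (normAtFin K w b)) (normAtFin K w c) = 1 := by
      intro w
      have h1 : normAtFin K w a = 1 := by
        rw [hadef, ← Units.val_pow_eq_pow_val]
        exact Aux.normAtFin_unit w (ε ^ n)
      have h2 : normAtFin K w b = 1 := Aux.normAtFin_neg_one w
      have h3 : normAtFin K w c ≤ 1 := by
        rw [hcdef]
        by_cases hmem : -(u n * v n) ∈ w.asIdeal
        · exact (Aux.normAtFin_am_lt_one w (neg_ne_zero.mpr huv0) hmem).le
        · exact (Aux.normAtFin_am_eq_one w (neg_ne_zero.mpr huv0) hmem).le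
      rw [h1, h2, max_self]
      exact max_eq_left h3
    have hone : (∏ᶠ w : HeightOneSpectrum (𝓞 K),
        max (max (normAtFin K w a) (normAtFin K w b)) (normAtFin K w c)) = 1 :=
      finprod_eq_one_of_forall_eq_one hfin
    set ψ : K →+* ℂ := Complex.ofRealHom.comp φ with hψdef
    set w₀ : InfinitePlace K := NumberField.InfinitePlace.mk ψ with hw₀def
    have hw₀app : ∀ x : K, w₀ x = |φ x| := by
      intro x
      rw [hw₀def, NumberField.InfinitePlace.apply]
      simp [hψdef, Complex.norm_real]
    have hw₀real : w₀.IsReal := by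
      rw [hw₀def, NumberField.InfinitePlace.isReal_mk_iff,
        NumberField.ComplexEmbedding.isReal_iff]
      ext x
      simp [NumberField.ComplexEmbedding.conjugate_coe_eq, hψdef, Complex.conj_ofReal]
    have hmult : w₀.mult = 1 := by
      rw [NumberField.InfinitePlace.mult, if_pos hw₀real]
    have hbone : ∀ w : InfinitePlace K, normAtInf K w b = 1 := by
      intro w
      have : w b = 1 := by
        rw [hbdef, ← NumberField.InfinitePlace.mk_embedding w,
          NumberField.InfinitePlace.apply]
        simp
      rw [normAtInf, this, one_pow]
    set F : InfinitePlace K → ℝ := fun w =>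
      max (max (normAtInf K w a) (normAtInf K w b)) (normAtInf K w c) with hFdef
    have hF1 : ∀ w : InfinitePlace K, 1 ≤ F w := by
      intro w
      calc (1:ℝ) = normAtInf K w b := (hbone w).symm
        _ ≤ max (normAtInf K w a) (normAtInf K w b) := le_max_right _ _
        _ ≤ F w := le_max_left _ _
    have hFw₀ : |φ (algebraMap (𝓞 K) K (ε : 𝓞 K))| ^ n ≤ F w₀ := by
      have hval : normAtInf K w₀ a = |φ (algebraMap (𝓞 K) K (ε : 𝓞 K))| ^ n := by
        rw [normAtInf, hmult, pow_one, hw₀app, hadef, map_pow, map_pow, abs_pow]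
      calc |φ (algebraMap (𝓞 K) K (ε : 𝓞 K))| ^ n = normAtInf K w₀ a := hval.symm
        _ ≤ max (normAtInf K w₀ a) (normAtInf K w₀ b) := le_max_left _ _
        _ ≤ F w₀ := le_max_left _ _
    have hprodF : F w₀ ≤ ∏ w : InfinitePlace K, F w := by
      have hle : ∀ w ∈ Finset.univ, (if w = w₀ then F w else 1) ≤ F w := by
        intro w _
        split
        · exact le_rfl
        · exact hF1 w
      have h0 : ∀ w ∈ Finset.univ, (0:ℝ) ≤ if w = w₀ then F w else 1 := by
        intro w _
        split
        · exact le_trans zero_le_one (hF1 w)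
        · exact zero_le_one
      have := Finset.prod_le_prod h0 hle
      rwa [Finset.prod_ite_eq' Finset.univ w₀ F, if_pos (Finset.mem_univ w₀)] at this
    rw [heightK, hone, one_mul]
    exact hFw₀.trans hprodF
  -- the radical upper bound
  have hradeq : ∃ P : ℕ, radK K a b c ≤ (absNormElem K (u n) : ℝ) ^ 2 * (P : ℝ) * DN ∧
      P ^ 2 ≤ absNormElem K (v n) ∧ 0 ≤ radK K a b c := by
    have hIu : Ideal.span {u n} ≠ (⊥ : Ideal (𝓞 K)) := by
      rw [Ne, Ideal.span_singleton_eq_bot]; exact hu0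
    have hIv : Ideal.span {v n} ≠ (⊥ : Ideal (𝓞 K)) := by
      rw [Ne, Ideal.span_singleton_eq_bot]; exact hv0
    have hSufin : {w : HeightOneSpectrum (𝓞 K) | w.asIdeal ∣ Ideal.span {u n}}.Finite :=
      Ideal.finite_factors hIu
    have hSvfin : {w : HeightOneSpectrum (𝓞 K) | w.asIdeal ∣ Ideal.span {v n}}.Finite :=
      Ideal.finite_factors hIv
    set Su : Finset (HeightOneSpectrum (𝓞 K)) := hSufin.toFinset with hSudef
    set Sv : Finset (HeightOneSpectrum (𝓞 K)) := hSvfin.toFinset with hSvdef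
    set G : HeightOneSpectrum (𝓞 K) → ℕ := fun w =>
      if u n * v n ∈ w.asIdeal then Ideal.absNorm w.asIdeal ^ ramIdxOverQ K w else 1 with hGdef
    -- identify the integrand of radK
    have hint : ∀ w : HeightOneSpectrum (𝓞 K),
        (if normAtFin K w a = normAtFin K w b ∧ normAtFin K w b = normAtFin K w c then 1
          else (Ideal.absNorm w.asIdeal : ℝ) ^ (ramIdxOverQ K w)) = ((G w : ℕ) : ℝ) := by
      intro w
      have h1 : normAtFin K w a = 1 := by
        rw [hadef, ← Units.val_pow_eq_pow_val]
        exact Aux.normAtFin_unit w (ε ^ n)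
      have h2 : normAtFin K w b = 1 := Aux.normAtFin_neg_one w
      by_cases hmem : u n * v n ∈ w.asIdeal
      · have hclt : normAtFin K w c < 1 := by
          rw [hcdef]
          exact Aux.normAtFin_am_lt_one w (neg_ne_zero.mpr huv0) (neg_mem_iff.mpr hmem)
        rw [if_neg, hGdef]
        · simp only [if_pos hmem]
          push_cast
          rfl
        · rintro ⟨-, hbc⟩
          rw [h2] at hbc
          exact absurd hbc.symm hclt.ne
      · have hceq : normAtFin K w c = 1 := by
          rw [hcdef]
          exact Aux.normAtFin_am_eq_one w (neg_ne_zero.mpr huv0) (fun h => hmem (neg_mem_iff.mp h))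
        rw [if_pos ⟨h1.trans h2.symm, h2.trans hceq.symm⟩, hGdef]
        simp only [if_neg hmem, Nat.cast_one]
    -- support of the integrand
    have hsupp : Function.mulSupport (fun w : HeightOneSpectrum (𝓞 K) => ((G w : ℕ) : ℝ)) ⊆
        ↑(Su ∪ Sv) := by
      intro w hw
      simp only [Function.mem_mulSupport] at hw
      have hmem : u n * v n ∈ w.asIdeal := by
        by_contra h
        rw [hGdef] at hw
        simp [h] at hw
      have hdvd : w.asIdeal ∣ Ideal.span {u n} * Ideal.span {v n} := by
        rw [Ideal.span_singleton_mul_span_singleton]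
        exact Ideal.dvd_span_singleton.mpr hmem
      have hp : Prime w.asIdeal := Ideal.prime_of_isPrime w.ne_bot w.isPrime
      rcases hp.2.2 _ _ hdvd with h | h
      · simp only [Finset.coe_union, Set.mem_union, Finset.mem_coe, hSudef, hSvdef,
          Set.Finite.mem_toFinset, Set.mem_setOf_eq]
        exact Or.inl h
      · simp only [Finset.coe_union, Set.mem_union, Finset.mem_coe, hSudef, hSvdef,
          Set.Finite.mem_toFinset, Set.mem_setOf_eq]
        exact Or.inr h
    have hradval : radK K a b c = ((∏ w ∈ Su ∪ Sv, G w : ℕ) : ℝ) := by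
      rw [radK, finprod_congr hint, finprod_eq_prod_of_mulSupport_subset _ hsupp, Nat.cast_prod]
    -- disjointness
    have hdisj : Disjoint Su Sv := by
      rw [Finset.disjoint_left]
      intro w hwu hwv
      rw [hSudef, Set.Finite.mem_toFinset, Set.mem_setOf_eq] at hwu
      rw [hSvdef, Set.Finite.mem_toFinset, Set.mem_setOf_eq] at hwv
      have h1 : u n ∈ w.asIdeal := Ideal.dvd_span_singleton.mp hwu
      have h2 : v n ∈ w.asIdeal := Ideal.dvd_span_singleton.mp hwv
      obtain ⟨x, y, hxy⟩ := hcop n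
      have hone : (1 : 𝓞 K) ∈ w.asIdeal := by
        rw [← hxy]
        exact Ideal.add_mem _ (Ideal.mul_mem_left _ _ h1) (Ideal.mul_mem_left _ _ h2)
      exact w.isPrime.ne_top (Ideal.eq_top_of_isUnit_mem _ hone isUnit_one)
    have hmax : ∀ w : HeightOneSpectrum (𝓞 K), w.asIdeal.IsMaximal :=
      fun w => Ideal.IsPrime.isMaximal w.isPrime w.ne_bot
    have hpair : ∀ s : Finset (HeightOneSpectrum (𝓞 K)),
        (↑s : Set (HeightOneSpectrum (𝓞 K))).Pairwise
          (Function.onFun IsCoprime fun w : HeightOneSpectrum (𝓞 K) => w.asIdeal) := by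
      intro s w1 _ w2 _ hne
      exact Ideal.isCoprime_iff_sup_eq.mpr
        ((hmax w1).coprime_of_ne (hmax w2) (fun h => hne (HeightOneSpectrum.ext h)))
    -- bound over Su
    have hdvdu : (∏ w ∈ Su, w.asIdeal) ∣ Ideal.span {u n} :=
      Finset.prod_dvd_of_coprime (hpair Su)
        (fun w hw => by rwa [hSudef, Set.Finite.mem_toFinset, Set.mem_setOf_eq] at hw)
    have hNuElem : absNormElem K (u n) = Ideal.absNorm (Ideal.span {u n}) := by
      rw [Ideal.absNorm_span_singleton]; rfl
    have hNvElem : absNormElem K (v n) = Ideal.absNorm (Ideal.span {v n}) := by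
      rw [Ideal.absNorm_span_singleton]; rfl
    have hNupos : 0 < absNormElem K (u n) := by
      rw [hNuElem]
      exact Nat.pos_of_ne_zero (fun h => hIu (Ideal.absNorm_eq_zero_iff.mp h))
    have hNvpos : 0 < absNormElem K (v n) := by
      rw [hNvElem]
      exact Nat.pos_of_ne_zero (fun h => hIv (Ideal.absNorm_eq_zero_iff.mp h))
    have hNu : (∏ w ∈ Su, Ideal.absNorm w.asIdeal) ≤ absNormElem K (u n) := by
      rw [← map_prod Ideal.absNorm, hNuElem]
      exact Nat.le_of_dvd (hNuElem ▸ hNupos) (map_dvd Ideal.absNorm hdvdu)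
    have hGu : ∏ w ∈ Su, G w ≤ absNormElem K (u n) ^ 2 := by
      calc ∏ w ∈ Su, G w ≤ ∏ w ∈ Su, (Ideal.absNorm w.asIdeal) ^ 2 := by
            refine Finset.prod_le_prod' fun w _ => ?_
            simp only [hGdef]
            split
            · exact Aux.norm_pow_ramIdx_le hdeg w
            · exact Nat.one_le_pow _ _ (by have := Aux.absNorm_one_lt_nat w; omega)
        _ = (∏ w ∈ Su, Ideal.absNorm w.asIdeal) ^ 2 := by rw [Finset.prod_pow]
        _ ≤ absNormElem K (u n) ^ 2 := Nat.pow_le_pow_left hNu 2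
    -- bound over Sv
    haveI hPIR : IsPrincipalIdealRing (𝓞 K) := NumberField.classNumber_eq_one_iff.mp hclass
    have hsq : ∀ w ∈ Sv, w.asIdeal ^ 2 ∣ Ideal.span {v n} := by
      intro w hw
      rw [hSvdef, Set.Finite.mem_toFinset, Set.mem_setOf_eq] at hw
      have hvnmem : v n ∈ w.asIdeal := Ideal.dvd_span_singleton.mp hw
      have hspan : Ideal.span {Submodule.IsPrincipal.generator w.asIdeal} = w.asIdeal :=
        Ideal.span_singleton_generator _
      have hπ : Prime (Submodule.IsPrincipal.generator w.asIdeal) :=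
        Submodule.IsPrincipal.prime_generator_of_isPrime _ w.ne_bot
      have hπdvd : Submodule.IsPrincipal.generator w.asIdeal ∣ v n := by
        rw [← Ideal.mem_span_singleton, hspan]; exact hvnmem
      have hπ2 : (Submodule.IsPrincipal.generator w.asIdeal) ^ 2 ∣ v n := hv n _ hπ hπdvd
      rw [← hspan, Ideal.span_singleton_pow]
      exact Ideal.dvd_span_singleton.mpr (Ideal.mem_span_singleton.mpr hπ2)
    have hdvdv : (∏ w ∈ Sv, w.asIdeal ^ 2) ∣ Ideal.span {v n} := by
      refine Finset.prod_dvd_of_coprime ?_ hsq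
      intro w1 h1 w2 h2 hne
      exact ((hpair Sv) h1 h2 hne).pow
    set P : ℕ := ∏ w ∈ Sv, Ideal.absNorm w.asIdeal with hPdef
    have hP2 : P ^ 2 ≤ absNormElem K (v n) := by
      have heq : P ^ 2 = Ideal.absNorm (∏ w ∈ Sv, w.asIdeal ^ 2) := by
        rw [hPdef, map_prod Ideal.absNorm]
        rw [← Finset.prod_pow]
        refine Finset.prod_congr rfl fun w _ => ?_
        rw [map_pow]
      rw [heq, hNvElem]
      exact Nat.le_of_dvd (hNvElem ▸ hNvpos) (map_dvd Ideal.absNorm hdvdv)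
    have hGv : ∏ w ∈ Sv, G w ≤ P * DN := by
      calc ∏ w ∈ Sv, G w
          ≤ ∏ w ∈ Sv, (Ideal.absNorm w.asIdeal *
              (if w ∈ T then Ideal.absNorm w.asIdeal else 1)) := by
            refine Finset.prod_le_prod' fun w _ => ?_
            have hN1 : 1 ≤ Ideal.absNorm w.asIdeal := (Aux.absNorm_one_lt_nat w).le
            have hite : 1 ≤ (if w ∈ T then Ideal.absNorm w.asIdeal else 1) := by
              split
              · exact hN1
              · exact le_rfl
            simp only [hGdef]
            split
            · by_cases h2 : 2 ≤ ramIdxOverQ K w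
              · have hwT : w ∈ T := by
                  rw [hTdef, Set.Finite.mem_toFinset, Set.mem_setOf_eq]
                  exact Aux.dvd_different_of_two_le w h2
                rw [if_pos hwT, ← sq]
                exact Aux.norm_pow_ramIdx_le hdeg w
              · calc Ideal.absNorm w.asIdeal ^ ramIdxOverQ K w
                    ≤ Ideal.absNorm w.asIdeal ^ 1 := Nat.pow_le_pow_right hN1 (by omega)
                  _ = Ideal.absNorm w.asIdeal := pow_one _
                  _ ≤ _ := Nat.le_mul_of_pos_right _ (by omega)
            · exact Nat.one_le_iff_ne_zero.mpr (Nat.mul_ne_zero (by omega) (by omega))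
        _ = P * ∏ w ∈ Sv, (if w ∈ T then Ideal.absNorm w.asIdeal else 1) := by
            rw [Finset.prod_mul_distrib]
        _ = P * ∏ w ∈ Sv ∩ T, Ideal.absNorm w.asIdeal := by
            rw [Finset.prod_ite_mem]
        _ ≤ P * DN := by
            refine Nat.mul_le_mul_left _ ?_
            exact Finset.prod_le_prod_of_subset_of_one_le' Finset.inter_subset_right
              (fun w _ _ => (Aux.absNorm_one_lt_nat w).le)
    refine ⟨P, ?_, hP2, ?_⟩
    · calc radK K a b c = ((∏ w ∈ Su ∪ Sv, G w : ℕ) : ℝ) := hradval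
        _ = (((∏ w ∈ Su, G w) * (∏ w ∈ Sv, G w) : ℕ) : ℝ) := by
            rw [Finset.prod_union hdisj]
        _ ≤ ((absNormElem K (u n) ^ 2 * (P * DN) : ℕ) : ℝ) := by
            exact_mod_cast Nat.mul_le_mul hGu hGv
        _ = (absNormElem K (u n) : ℝ) ^ 2 * (P : ℝ) * DN := by
            push_cast; ring
    · rw [hradval]; exact Nat.cast_nonneg _
  obtain ⟨P, hrle, hP2, hrad0⟩ := hradeq
  -- combine
  have hNu1 : (1 : ℝ) ≤ (absNormElem K (u n) : ℝ) := by
    have : absNormElem K (u n) ≠ 0 := by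
      intro h
      apply hu0
      have : Ideal.absNorm (Ideal.span {u n}) = 0 := by
        rwa [Ideal.absNorm_span_singleton]
      rw [Ideal.absNorm_eq_zero_iff, Ideal.span_singleton_eq_bot] at this
      exact this
    exact_mod_cast Nat.one_le_iff_ne_zero.mpr this
  have hPsqrt : (P : ℝ) ≤ Real.sqrt (absNormElem K (v n)) := by
    rw [Real.le_sqrt (by positivity) (by positivity)]
    exact_mod_cast hP2
  have hrle2 : radK K a b c ≤ ((absNormElem K (u n) : ℝ) ^ 2 *
      Real.sqrt (absNormElem K (v n))) * DN := by
    refine hrle.trans ?_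
    have h1 : (absNormElem K (u n) : ℝ) ^ 2 * (P : ℝ) ≤
        (absNormElem K (u n) : ℝ) ^ 2 * Real.sqrt (absNormElem K (v n)) := by
      apply mul_le_mul_of_nonneg_left hPsqrt (by positivity)
    exact mul_le_mul_of_nonneg_right h1 (by positivity)
  have hXnn : (0:ℝ) ≤ (absNormElem K (u n) : ℝ) ^ 2 * Real.sqrt (absNormElem K (v n)) := by
    positivity
  calc |φ (algebraMap (𝓞 K) K (ε : 𝓞 K))| ^ n ≤ heightK K a b c := hheight
    _ ≤ C * (radK K a b c) ^ (1 + δ) := key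
    _ ≤ C * (((absNormElem K (u n) : ℝ) ^ 2 * Real.sqrt (absNormElem K (v n))) * DN) ^ (1 + δ) := by
        apply mul_le_mul_of_nonneg_left _ hC.le
        exact Real.rpow_le_rpow hrad0 hrle2 (by linarith)
    _ = C * (((absNormElem K (u n) : ℝ) ^ 2 * Real.sqrt (absNormElem K (v n))) ^ (1 + δ) *
          (DN : ℝ) ^ (1 + δ)) := by
        rw [Real.mul_rpow hXnn (by positivity)]
    _ = C * (DN : ℝ) ^ (1 + δ) * ((absNormElem K (u n) : ℝ) ^ 2 *
          Real.sqrt (absNormElem K (v n))) ^ (1 + δ) := by ring
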